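/- Let a, b ∈ ℂ. Then the function x ↦ Γ(x + a) / (Γ(x + b) · x^{a−b}) (with x^{a−b} := exp((a−b)·log x) for x > 0) tends to 1 as the real variable x → +∞. -/

import Mathlib

open Complex Filter Set MeasureTheory Real Topology

theorem cpow_aesm (a : ℂ) : AEStronglyMeasurable (fun u : ℝ => (u:ℂ) ^ (a-1))
    (volume.restrict (Ioi (0:ℝ))) := by
  refine (ContinuousOn.aestronglyMeasurable ?_ measurableSet_Ioi)
  intro u hu
  exact (continuousAt_ofReal_cpow_const u _ (Or.inr (ne_of_gt hu))).continuousWithinAt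

theorem rpow_cont {x : ℝ} (hx : (1:ℝ) ≤ x) :
    Continuous (fun u : ℝ => ((1 - u/x) ^ (x-1) : ℝ)) := by
  rw [continuous_iff_continuousAt]
  intro u
  exact (Real.continuousAt_rpow_const _ _ (Or.inr (by linarith))).comp
    ((continuous_const.sub (continuous_id'.div_const x)).continuousAt)

theorem core1 (a : ℂ) (ha : 0 < a.re) :
    Tendsto (fun x : ℝ => ∫ u in (0:ℝ)..x, ((1 - u/x) ^ (x-1) : ℝ) * (u:ℂ) ^ (a-1)) atTop
      (𝓝 (Complex.Gamma a)) := by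
  rw [Complex.Gamma_eq_integral ha]
  let f : ℝ → ℝ → ℂ := fun x =>
    indicator (Ioc 0 x) fun u : ℝ => ((1 - u/x) ^ (x-1) : ℝ) * (u:ℂ) ^ (a-1)
  have f_meas : ∀ᶠ x : ℝ in atTop, AEStronglyMeasurable (f x) (volume.restrict (Ioi 0)) := by
    filter_upwards [eventually_ge_atTop (2:ℝ)] with x hx
    exact (((Complex.continuous_ofReal.comp (rpow_cont (by linarith))).aestronglyMeasurable).mul
      (cpow_aesm a)).indicator measurableSet_Ioc
  have h_bound : ∀ᶠ x : ℝ in atTop, ∀ᵐ u ∂(volume.restrict (Ioi (0:ℝ))),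
      ‖f x u‖ ≤ u ^ (a.re - 1) * Real.exp (-(1/2) * u ^ (1:ℝ)) := by
    filter_upwards [eventually_ge_atTop (2:ℝ)] with x hx
    rw [ae_restrict_iff' measurableSet_Ioi]
    filter_upwards with u hu
    have hu' : (0:ℝ) < u := hu
    dsimp only [f]
    rcases lt_or_ge x u with hxu | hxu
    · rw [indicator_of_notMem (fun h => absurd h.2 (not_le.mpr hxu)), norm_zero]
      positivity
    · rw [indicator_of_mem (mem_Ioc.mpr ⟨hu', hxu⟩)]
      have hxpos : (0:ℝ) < x := by linarith
      have hbase : (0:ℝ) ≤ 1 - u / x := by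
        rw [sub_nonneg]; exact div_le_one_of_le₀ hxu hxpos.le
      have key : (1 - u/x) ^ (x-1) ≤ Real.exp (-(1/2) * u ^ (1:ℝ)) := by
        have h2 : 1 - u/x ≤ Real.exp (-(u/x)) := by
          have := Real.add_one_le_exp (-(u/x)); linarith
        calc (1 - u/x) ^ (x-1) ≤ (Real.exp (-(u/x))) ^ (x-1) :=
              Real.rpow_le_rpow hbase h2 (by linarith)
          _ = Real.exp (-(u/x) * (x-1)) := (Real.exp_mul _ _).symm
          _ ≤ Real.exp (-(1/2) * u ^ (1:ℝ)) := by
              rw [Real.exp_le_exp, Real.rpow_one]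
              have h3 : u/2 ≤ u*(x-1)/x := by
                rw [div_le_div_iff₀ two_pos hxpos]; nlinarith
              calc -(u/x)*(x-1) = -(u*(x-1)/x) := by ring
                _ ≤ -(u/2) := neg_le_neg h3
                _ = -(1/2)*u := by ring
      calc ‖(((1 - u/x) ^ (x-1) : ℝ) : ℂ) * (u:ℂ) ^ (a-1)‖
          = (1 - u/x) ^ (x-1) * u ^ (a.re - 1) := by
            rw [norm_mul, Complex.norm_real, Real.norm_eq_abs,
              _root_.abs_of_nonneg (Real.rpow_nonneg hbase _),
              Complex.norm_cpow_eq_rpow_re_of_pos hu', sub_re, one_re]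
        _ ≤ Real.exp (-(1/2) * u ^ (1:ℝ)) * u ^ (a.re - 1) := by
            gcongr
        _ = u ^ (a.re - 1) * Real.exp (-(1/2) * u ^ (1:ℝ)) := mul_comm _ _
  have bound_int : Integrable (fun u : ℝ => u ^ (a.re - 1) * Real.exp (-(1/2) * u ^ (1:ℝ)))
      (volume.restrict (Ioi (0:ℝ))) :=
    integrableOn_rpow_mul_exp_neg_mul_rpow (by linarith) zero_lt_one (by norm_num)
  have h_lim : ∀ᵐ u ∂(volume.restrict (Ioi (0:ℝ))),
      Tendsto (fun x : ℝ => f x u) atTop (𝓝 (↑(Real.exp (-u)) * (u:ℂ) ^ (a-1))) := by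
    rw [ae_restrict_iff' measurableSet_Ioi]
    filter_upwards with u hu
    have hu' : (0:ℝ) < u := hu
    apply Tendsto.congr'
    · show ∀ᶠ x : ℝ in atTop, (((1 - u/x) ^ (x-1) : ℝ) : ℂ) * (u:ℂ) ^ (a-1) = f x u
      filter_upwards [eventually_ge_atTop u] with x hx
      dsimp only [f]
      rw [indicator_of_mem (mem_Ioc.mpr ⟨hu', hx⟩)]
    · have hreal : Tendsto (fun x : ℝ => (1 - u/x) ^ (x-1)) atTop (𝓝 (Real.exp (-u))) := by
        have hbase : Tendsto (fun x : ℝ => 1 + (-u)/x) atTop (𝓝 1) := by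
          simpa using (tendsto_const_nhds (x := (1:ℝ))).add
            ((tendsto_const_nhds (x := -u)).div_atTop tendsto_id)
        have hmain := (tendsto_one_add_div_rpow_exp (-u)).div hbase one_ne_zero
        rw [div_one] at hmain
        apply hmain.congr'
        filter_upwards [eventually_gt_atTop u] with x hx
        have hxpos : (0:ℝ) < x := lt_trans hu' hx
        have hb : (0:ℝ) < 1 + (-u)/x := by
          rw [neg_div, ← sub_eq_add_neg, sub_pos]
          exact (div_lt_one hxpos).mpr hx
        have hb' : (0:ℝ) < 1 - u/x := by rw [sub_pos]; exact (div_lt_one hxpos).mpr hx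
        simp only [Pi.div_apply]
        rw [show 1 + -u/x = 1 - u/x from by ring, Real.rpow_sub hb', Real.rpow_one]
      exact ((Complex.continuous_ofReal.tendsto _).comp hreal).mul_const _
  have main := MeasureTheory.tendsto_integral_filter_of_dominated_convergence _ f_meas h_bound
    bound_int h_lim
  apply main.congr'
  filter_upwards [eventually_ge_atTop (0:ℝ)] with x hx
  rw [MeasureTheory.integral_indicator measurableSet_Ioc,
    intervalIntegral.integral_of_le hx,
    Measure.restrict_restrict_of_subset Ioc_subset_Ioi_self]

theorem beta_eq (a : ℂ) {x : ℝ} (hx : 1 ≤ x) :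
    (x:ℂ)^a * Complex.betaIntegral a x =
      ∫ u in (0:ℝ)..x, ((1 - u/x) ^ (x-1) : ℝ) * (u:ℂ) ^ (a-1) := by
  have hx0 : (0:ℝ) < x := lt_of_lt_of_le one_pos hx
  have hxne : (x:ℝ) ≠ 0 := hx0.ne'
  have hxc : (x:ℂ) ≠ 0 := ofReal_ne_zero.mpr hxne
  have huu : ∀ u : ℝ, u = u / x * x := fun u => (div_mul_cancel₀ u hxne).symm
  conv_rhs => enter [1, u, 2, 1]; rw [huu u]
  have hcomp := intervalIntegral.integral_comp_div (a := 0) (b := x)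
    (fun t => (((1-t) ^ (x-1) : ℝ) : ℂ) * ((t * x : ℝ) : ℂ) ^ (a-1) : ℝ → ℂ) hxne
  rw [hcomp, zero_div, div_self hxne, Complex.betaIntegral, real_smul,
    ← intervalIntegral.integral_const_mul, ← intervalIntegral.integral_const_mul]
  simp_rw [intervalIntegral.integral_of_le zero_le_one]
  refine setIntegral_congr_fun measurableSet_Ioc fun t ht => ?_
  have h1t : (0:ℝ) ≤ 1 - t := by linarith [ht.2]
  have A : (x:ℂ) ^ a = x * (x:ℂ) ^ (a-1) := by
    conv_lhs => rw [(by ring : a = 1 + (a-1)), cpow_add _ _ hxc]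
    simp
  have B : ((t * x : ℝ) : ℂ) ^ (a-1) = (t:ℂ) ^ (a-1) * (x:ℂ) ^ (a-1) := by
    push_cast
    rw [mul_cpow_ofReal_nonneg ht.1.le hx0.le]
  have C : (((1-t) ^ (x-1) : ℝ) : ℂ) = (1 - (t:ℂ)) ^ ((x:ℂ) - 1) := by
    rw [Complex.ofReal_cpow h1t]
    push_cast
    ring_nf
  rw [A, B, C]
  ring

theorem half_plane (a : ℂ) (ha : 0 < a.re) :
    Tendsto (fun x : ℝ => Complex.Gamma ((x:ℂ) + a) /
      (Complex.Gamma (x:ℂ) * Complex.exp (a * (Real.log x : ℂ)))) atTop (𝓝 1) := by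
  have hΓa : Complex.Gamma a ≠ 0 := Complex.Gamma_ne_zero_of_re_pos ha
  have h1 : Tendsto (fun x : ℝ => (x:ℂ)^a * Complex.betaIntegral a x) atTop
      (𝓝 (Complex.Gamma a)) := by
    apply (core1 a ha).congr'
    filter_upwards [eventually_ge_atTop (1:ℝ)] with x hx
    exact (beta_eq a hx).symm
  have h2 := (tendsto_const_nhds (x := Complex.Gamma a) (f := atTop (α := ℝ))).div h1 hΓa
  rw [div_self hΓa] at h2
  apply h2.congr'
  filter_upwards [eventually_ge_atTop (1:ℝ)] with x hx
  have hx0 : (0:ℝ) < x := lt_of_lt_of_le one_pos hx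
  have hxc : (x:ℂ) ≠ 0 := ofReal_ne_zero.mpr hx0.ne'
  have hxre : 0 < (x:ℂ).re := by rwa [ofReal_re]
  have hpow : Complex.exp (a * (Real.log x : ℂ)) = (x:ℂ) ^ a := by
    rw [cpow_def_of_ne_zero hxc, ← Complex.ofReal_log hx0.le, mul_comm]
  have hpowne : (x:ℂ) ^ a ≠ 0 := by rw [← hpow]; exact Complex.exp_ne_zero _
  have hΓx : Complex.Gamma (x:ℂ) ≠ 0 := Complex.Gamma_ne_zero_of_re_pos hxre
  have hβeq := Complex.Gamma_mul_Gamma_eq_betaIntegral ha hxre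
  have hBne : Complex.betaIntegral a x ≠ 0 := by
    intro h
    rw [h, mul_zero] at hβeq
    exact (mul_ne_zero hΓa hΓx) hβeq
  rw [show ((x:ℂ) + a) = a + x from add_comm _ _, hpow]
  simp only [Pi.div_apply]
  field_simp
  linear_combination hβeq

theorem step (c : ℂ)
    (h : Tendsto (fun x : ℝ => Complex.Gamma ((x:ℂ) + (c+1)) /
      (Complex.Gamma (x:ℂ) * Complex.exp ((c+1) * (Real.log x : ℂ)))) atTop (𝓝 1)) :
    Tendsto (fun x : ℝ => Complex.Gamma ((x:ℂ) + c) /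
      (Complex.Gamma (x:ℂ) * Complex.exp (c * (Real.log x : ℂ)))) atTop (𝓝 1) := by
  have hinv : Tendsto (fun x : ℝ => ((x:ℂ))⁻¹) atTop (𝓝 0) := by
    have := (Complex.continuous_ofReal.tendsto 0).comp (tendsto_inv_atTop_zero (𝕜 := ℝ))
    apply this.congr
    intro x
    simp [Function.comp, Complex.ofReal_inv]
  have hq : Tendsto (fun x : ℝ => 1 + c * ((x:ℂ))⁻¹) atTop (𝓝 1) := by
    simpa using (tendsto_const_nhds (x := (1:ℂ))).add (hinv.const_mul c)
  have htend : Tendsto (fun x : ℝ => (x:ℂ) / ((x:ℂ) + c)) atTop (𝓝 1) := by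
    have h2 := (hq.inv₀ one_ne_zero)
    rw [inv_one] at h2
    apply h2.congr'
    filter_upwards [eventually_gt_atTop ‖c‖, eventually_gt_atTop 0] with x hx hx0
    have hxc : (x:ℂ) ≠ 0 := ofReal_ne_zero.mpr hx0.ne'
    have hxcne : (x:ℂ) + c ≠ 0 := by
      intro hzero
      have : ((x:ℂ) + c).re = 0 := by rw [hzero]; simp
      simp only [add_re, ofReal_re] at this
      have := Complex.abs_re_le_norm c
      rw [abs_le] at this
      linarith [this.1]
    field_simp
  have := h.mul htend
  rw [mul_one] at this
  apply this.congr'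
  filter_upwards [eventually_gt_atTop ‖c‖, eventually_gt_atTop 0] with x hx hx0
  have hxc : (x:ℂ) ≠ 0 := ofReal_ne_zero.mpr hx0.ne'
  have hxcne : (x:ℂ) + c ≠ 0 := by
    intro hzero
    have : ((x:ℂ) + c).re = 0 := by rw [hzero]; simp
    simp only [add_re, ofReal_re] at this
    have := Complex.abs_re_le_norm c
    rw [abs_le] at this
    linarith [this.1]
  have hG : Complex.Gamma ((x:ℂ) + (c+1)) = ((x:ℂ) + c) * Complex.Gamma ((x:ℂ) + c) := by
    rw [show (x:ℂ) + (c+1) = ((x:ℂ) + c) + 1 by ring, Complex.Gamma_add_one _ hxcne]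
  have hE : Complex.exp ((c+1) * (Real.log x : ℂ)) =
      Complex.exp (c * (Real.log x : ℂ)) * (x:ℂ) := by
    rw [show (c+1) * (Real.log x : ℂ) = c * (Real.log x : ℂ) + (Real.log x : ℂ) by ring,
      Complex.exp_add, ← Complex.ofReal_exp, Real.exp_log hx0]
  rw [hG, hE]
  have hexp := Complex.exp_ne_zero (c * (Real.log x : ℂ))
  by_cases hΓ : Complex.Gamma (x:ℂ) = 0
  · simp [hΓ]
  · field_simp

theorem descend (a : ℂ) (n : ℕ)
    (h : Tendsto (fun x : ℝ => Complex.Gamma ((x:ℂ) + (a + n)) /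
      (Complex.Gamma (x:ℂ) * Complex.exp ((a + n) * (Real.log x : ℂ)))) atTop (𝓝 1)) :
    Tendsto (fun x : ℝ => Complex.Gamma ((x:ℂ) + a) /
      (Complex.Gamma (x:ℂ) * Complex.exp (a * (Real.log x : ℂ)))) atTop (𝓝 1) := by
  induction n generalizing a with
  | zero => simpa using h
  | succ n ih =>
    apply step a
    apply ih (a + 1)
    convert h using 3 with x
    · congr 2
      push_cast; ring
    · congr 2
      push_cast; ring

theorem ratio_one (a : ℂ) :
    Tendsto (fun x : ℝ => Complex.Gamma ((x:ℂ) + a) /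
      (Complex.Gamma (x:ℂ) * Complex.exp (a * (Real.log x : ℂ)))) atTop (𝓝 1) := by
  obtain ⟨n, hn⟩ := exists_nat_gt (-a.re)
  apply descend a n
  apply half_plane
  simp only [add_re, natCast_re]
  linarith

theorem gamma_ratio_stirling (a b : ℂ) :
    Filter.Tendsto
      (fun x : ℝ => Complex.Gamma ((x : ℂ) + a) /
        (Complex.Gamma ((x : ℂ) + b) * Complex.exp ((a - b) * (Real.log x : ℂ))))
      Filter.atTop (nhds 1) := by
  have h := (ratio_one a).div (ratio_one b) one_ne_zero
  rw [div_one] at h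
  apply h.congr'
  filter_upwards [eventually_gt_atTop ‖b‖, eventually_gt_atTop 0] with x hx hx0
  have hxbne : (x:ℂ) + b ≠ 0 := by
    intro hzero
    have : ((x:ℂ) + b).re = 0 := by rw [hzero]; simp
    simp only [add_re, ofReal_re] at this
    have := Complex.abs_re_le_norm b
    rw [abs_le] at this
    linarith [this.1]
  have hΓxb : Complex.Gamma ((x:ℂ) + b) ≠ 0 := by
    apply Complex.Gamma_ne_zero_of_re_pos
    simp only [add_re, ofReal_re]
    have := Complex.abs_re_le_norm b
    rw [abs_le] at this
    linarith [this.1]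
  have hxre : 0 < ((x:ℂ)).re := by rwa [ofReal_re]
  have hΓx : Complex.Gamma (x:ℂ) ≠ 0 := Complex.Gamma_ne_zero_of_re_pos hxre
  have hEab : Complex.exp ((a - b) * (Real.log x : ℂ)) =
      Complex.exp (a * (Real.log x : ℂ)) / Complex.exp (b * (Real.log x : ℂ)) := by
    rw [eq_div_iff (Complex.exp_ne_zero _), ← Complex.exp_add]
    congr 1
    ring
  rw [hEab]
  have e1 := Complex.exp_ne_zero (a * (Real.log x : ℂ))
  have e2 := Complex.exp_ne_zero (b * (Real.log x : ℂ))
  simp only [Pi.div_apply]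
  field_simp
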